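/- For an n×m real matrix x, (p,q) ∈ ℤ^m × ℤ^n \ {0}, and the affine subspace R_{p,q} := { x ∈ ℝ^{nm} : qx + p = 0 } of ℝ^{nm}, the distance from x to R_{p,q} with respect to the norm ‖x‖ = √n · max_{1≤ℓ≤m} |x_ℓ|₂ (where x_ℓ are the columns of x) equals √n · |qx + p| / |q|₂, where |·| is the supremum norm on ℝ^m and |q|₂ is the Euclidean norm of q. -/

import Mathlib

open Set Metric Filter

/-- The norm `‖x‖ = √n · max_ℓ |x_ℓ|₂` on `ℝ^{nm}` (viewed as `n × m` matrices, `x_ℓ`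
being the columns). -/
noncomputable def specialNorm (n m : ℕ) (x : Fin n → Fin m → ℝ) : ℝ :=
  Real.sqrt n * ⨆ ℓ : Fin m, Real.sqrt (∑ i, (x i ℓ) ^ 2)

/-- The affine subspace `R_{p,q} = {x : qx + p = 0}` of `ℝ^{nm}`, as a set. -/
def planeSet (n m : ℕ) (p : Fin m → ℤ) (q : Fin n → ℤ) : Set (Fin n → Fin m → ℝ) :=
  {x | ∀ ℓ, ∑ i, (q i : ℝ) * x i ℓ + (p ℓ : ℝ) = 0}

/-- The distance from `x` to the set `S` with respect to `specialNorm`. -/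
noncomputable def specialDist (n m : ℕ) (x : Fin n → Fin m → ℝ)
    (S : Set (Fin n → Fin m → ℝ)) : ℝ :=
  sInf ((fun y => specialNorm n m (x - y)) '' S)

/-- The distance from `x` to `R_{p,q}` with respect to the norm
`‖x‖ = √n max_ℓ |x_ℓ|₂` equals `√n |qx + p| / |q|₂`. -/
theorem stmt13 (n m : ℕ) (hn : 1 ≤ n) (hm : 1 ≤ m)
    (p : Fin m → ℤ) (q : Fin n → ℤ) (hq : q ≠ 0) (x : Fin n → Fin m → ℝ) :
    specialDist n m x (planeSet n m p q) =
      Real.sqrt n * (⨆ ℓ : Fin m, |∑ i, (q i : ℝ) * x i ℓ + (p ℓ : ℝ)|) /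
        Real.sqrt (∑ i, ((q i : ℝ)) ^ 2) := by
  have hmne : Nonempty (Fin m) := ⟨⟨0, hm⟩⟩
  set Qsq := ∑ i, ((q i : ℝ)) ^ 2 with hQsq
  have hQsqpos : 0 < Qsq := by
    obtain ⟨i, hi⟩ : ∃ i, q i ≠ 0 := by
      by_contra h; push_neg at h; exact hq (funext h)
    refine Finset.sum_pos' (fun j _ => sq_nonneg _) ⟨i, Finset.mem_univ i, ?_⟩
    have : ((q i : ℝ)) ≠ 0 := Int.cast_ne_zero.2 hi
    positivity
  set Q := Real.sqrt Qsq with hQ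
  have hQpos : 0 < Q := Real.sqrt_pos.2 hQsqpos
  set c : Fin m → ℝ := fun ℓ => ∑ i, (q i : ℝ) * x i ℓ + (p ℓ : ℝ) with hc
  -- the witness
  set y : Fin n → Fin m → ℝ := fun i ℓ => x i ℓ - (q i : ℝ) * c ℓ / Qsq with hy
  have hymem : y ∈ planeSet n m p q := by
    intro ℓ
    have h : ∑ i, (q i : ℝ) * y i ℓ
        = (∑ i, (q i : ℝ) * x i ℓ) - Qsq * (c ℓ / Qsq) := by
      rw [hQsq, Finset.sum_mul, ← Finset.sum_sub_distrib]
      exact Finset.sum_congr rfl fun i _ => by simp only [hy]; ring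
    rw [h, mul_div_cancel₀ _ hQsqpos.ne']
    simp only [hc]
    ring
  have hbddc : BddAbove (Set.range fun ℓ => |c ℓ|) := (Set.finite_range _).bddAbove
  have hdivsup : ∀ f : Fin m → ℝ, (⨆ ℓ, f ℓ) / Q = ⨆ ℓ, f ℓ / Q := by
    intro f
    simp_rw [div_eq_mul_inv]
    exact Real.iSup_mul_of_nonneg (inv_nonneg.2 hQpos.le) f
  have hsupc_nonneg : 0 ≤ ⨆ ℓ, |c ℓ| :=
    le_trans (abs_nonneg _) (le_ciSup hbddc (Classical.arbitrary (Fin m)))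
  -- norm of x - y
  have hnormxy : specialNorm n m (x - y) = Real.sqrt n * (⨆ ℓ, |c ℓ|) / Q := by
    have hcol : ∀ ℓ, Real.sqrt (∑ i, ((x - y) i ℓ) ^ 2) = |c ℓ| / Q := by
      intro ℓ
      have h1 : ∀ i, (x - y) i ℓ = (q i : ℝ) * (c ℓ / Qsq) := by
        intro i; simp [hy, mul_div_assoc]
      have h2 : ∑ i, ((x - y) i ℓ) ^ 2 = Qsq * (c ℓ / Qsq) ^ 2 := by
        simp_rw [h1, mul_pow, ← Finset.sum_mul]
        rfl
      rw [h2, Real.sqrt_mul hQsqpos.le, Real.sqrt_sq_eq_abs, abs_div, abs_of_pos hQsqpos]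
      rw [← hQ]
      rw [eq_div_iff hQpos.ne']
      have : Qsq = Q * Q := (Real.mul_self_sqrt hQsqpos.le).symm
      field_simp [this]
      rw [this]
      ring
    unfold specialNorm
    simp_rw [hcol]
    rw [mul_div_assoc]
    congr 1
    exact (hdivsup _).symm
  -- lower bound on norms
  have hlb : ∀ z ∈ planeSet n m p q,
      Real.sqrt n * (⨆ ℓ, |c ℓ|) / Q ≤ specialNorm n m (x - z) := by
    intro z hz
    have hbdd2 : BddAbove (Set.range fun ℓ => Real.sqrt (∑ i, ((x - z) i ℓ) ^ 2)) :=
      (Set.finite_range _).bddAbove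
    have key : ∀ ℓ, |c ℓ| / Q ≤ Real.sqrt (∑ i, ((x - z) i ℓ) ^ 2) := by
      intro ℓ
      have hsum : ∑ i, (q i : ℝ) * ((x - z) i ℓ) = c ℓ := by
        have hz' := hz ℓ
        simp only [Pi.sub_apply, mul_sub, Finset.sum_sub_distrib, hc]
        linarith [hz']
      have cs := Finset.sum_mul_sq_le_sq_mul_sq Finset.univ
        (fun i => (q i : ℝ)) (fun i => (x - z) i ℓ)
      rw [hsum] at cs
      have h1 : |c ℓ| ≤ Q * Real.sqrt (∑ i, ((x - z) i ℓ) ^ 2) := by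
        have := Real.sqrt_le_sqrt cs
        rwa [Real.sqrt_sq_eq_abs, Real.sqrt_mul (by positivity) ] at this
      rw [div_le_iff₀ hQpos]
      linarith [h1]
    have hsup : (⨆ ℓ, |c ℓ|) / Q ≤ ⨆ ℓ, Real.sqrt (∑ i, ((x - z) i ℓ) ^ 2) := by
      rw [hdivsup]
      exact ciSup_le fun ℓ => (key ℓ).trans (le_ciSup hbdd2 ℓ)
    unfold specialNorm
    rw [mul_div_assoc]
    exact mul_le_mul_of_nonneg_left hsup (Real.sqrt_nonneg _)
  -- conclude
  unfold specialDist
  apply le_antisymm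
  · calc sInf ((fun y => specialNorm n m (x - y)) '' planeSet n m p q)
        ≤ specialNorm n m (x - y) := by
          apply csInf_le
          · refine ⟨0, fun v hv => ?_⟩
            obtain ⟨z, hz, rfl⟩ := hv
            exact le_trans (by positivity) (hlb z hz)
          · exact ⟨y, hymem, rfl⟩
      _ = _ := by rw [hnormxy]
  · refine le_csInf ⟨specialNorm n m (x - y), ⟨y, hymem, rfl⟩⟩ ?_
    rintro v ⟨z, hz, rfl⟩
    exact hlb z hz
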